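/- arXiv:1008.3628 — 2 statements merged into one kernel-verified Lean document; each statement's English description precedes it below -/
import Mathlib

section
/- The QNL quadratic form Q^qnl is positive definite on U (i.e., Q^qnl(u) > 0 for every u ∈ U with u ≠ 0) if and only if A_F > 0. -/
open Finset

noncomputable section

/-- `u` is `2N`-periodic. -/
def IsPer (N : ℤ) (u : ℤ → ℝ) : Prop := ∀ ℓ : ℤ, u (ℓ + 2*N) = u ℓ

/-- `u` belongs to the displacement space `U`: `2N`-periodic with zero mean. -/
def InU (N : ℤ) (u : ℤ → ℝ) : Prop :=
  IsPer N u ∧ ∑ ℓ ∈ Finset.Icc (-N+1) N, u ℓ = 0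

/-- the scaled reference atomic spacing `ε = 1/N`. -/
def eps (N : ℤ) : ℝ := 1 / (N : ℝ)

/-- discrete derivative `(Dv)_ℓ = (v_ℓ - v_{ℓ-1})/ε`. -/
def Dd (N : ℤ) (v : ℤ → ℝ) : ℤ → ℝ := fun ℓ => (v ℓ - v (ℓ-1)) / eps N

/-- squared `ℓ²ε` norm: `ε Σ_{ℓ=-N+1}^{N} v_ℓ²`. -/
def nrm2 (N : ℤ) (v : ℤ → ℝ) : ℝ := eps N * ∑ ℓ ∈ Finset.Icc (-N+1) N, (v ℓ)^2

/-- `Ã_F = φ''_F + 4φ''_{2F}`. -/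
def Atil (pF p2F : ℝ) : ℝ := pF + 4*p2F

/-- `Â_F = 4G''_F(ρ'_F+2ρ'_{2F})² + 2G'_F(ρ''_F+4ρ''_{2F})`. -/
def Ahat (rF r2F rrF rr2F g1 g2 : ℝ) : ℝ := 4*g2*(rF + 2*r2F)^2 + 2*g1*(rrF + 4*rr2F)

/-- `A_F = Â_F + Ã_F`. -/
def AFc (pF p2F rF r2F rrF rr2F g1 g2 : ℝ) : ℝ := Ahat rF r2F rrF rr2F g1 g2 + Atil pF p2F

/-- `B_F`. -/
def BFc (p2F rF r2F rr2F g1 g2 : ℝ) : ℝ :=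
  -(p2F + g2*(rF^2 + 20*r2F^2 + 12*rF*r2F) + 2*g1*rr2F)

/-- `C_F`. -/
def CFc (rF r2F g2 : ℝ) : ℝ := g2*(8*r2F^2 + 2*rF*r2F)

/-- `D_F`. -/
def DFc (r2F g2 : ℝ) : ℝ := -(g2*r2F^2)

/-- `λ_F(s) = A_F + B_F s + C_F s² + D_F s³`. -/
def lamF (pF p2F rF r2F rrF rr2F g1 g2 s : ℝ) : ℝ :=
  AFc pF p2F rF r2F rrF rr2F g1 g2 + BFc p2F rF r2F rr2F g1 g2 * s
    + CFc rF r2F g2 * s^2 + DFc r2F g2 * s^3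

/-- per-atom atomistic contribution `q^a_ℓ(u)`. -/
def qaAtom (N : ℤ) (pF p2F rF r2F rrF rr2F g1 g2 : ℝ) (u : ℤ → ℝ) (ℓ : ℤ) : ℝ :=
  g2 * (rF * (Dd N u ℓ + Dd N u (ℓ+1))
      + r2F * (Dd N u (ℓ-1) + Dd N u ℓ + Dd N u (ℓ+1) + Dd N u (ℓ+2)))^2
   + g1 * (rrF * (Dd N u ℓ)^2 + rr2F * (Dd N u ℓ + Dd N u (ℓ-1))^2
         + rrF * (Dd N u (ℓ+1))^2 + rr2F * (Dd N u (ℓ+1) + Dd N u (ℓ+2))^2)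
   + (1/2) * (pF * ((Dd N u ℓ)^2 + (Dd N u (ℓ+1))^2)
         + p2F * ((Dd N u ℓ + Dd N u (ℓ-1))^2 + (Dd N u (ℓ+1) + Dd N u (ℓ+2))^2))

/-- interfacial contribution `q^i` with index triple `(a,b,c)`. -/
def qiAtom (N : ℤ) (pF p2F rF r2F rrF rr2F g1 g2 : ℝ) (u : ℤ → ℝ) (a b c : ℤ) : ℝ :=
  2*g2*(rF * Dd N u b + r2F*(Dd N u b + Dd N u a))^2
  + g1*(rrF*(Dd N u b)^2 + rr2F*(Dd N u b + Dd N u a)^2)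
  + (2*g2*(rF + 2*r2F)^2 + g1*(rrF + 4*rr2F))*(Dd N u c)^2
  + (1/2)*(pF*((Dd N u b)^2 + (Dd N u c)^2) + p2F*((Dd N u b + Dd N u a)^2 + 4*(Dd N u c)^2))

/-- continuum contribution `q^c_ℓ(u) = (A_F/2)((u'_ℓ)² + (u'_{ℓ+1})²)`. -/
def qcAtom (N : ℤ) (pF p2F rF r2F rrF rr2F g1 g2 : ℝ) (u : ℤ → ℝ) (ℓ : ℤ) : ℝ :=
  (AFc pF p2F rF r2F rrF rr2F g1 g2 / 2) * ((Dd N u ℓ)^2 + (Dd N u (ℓ+1))^2)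

/-- the QNL second-variation quadratic form `Q^qnl`. -/
def Qqnl (N K : ℤ) (pF p2F rF r2F rrF rr2F g1 g2 : ℝ) (u : ℤ → ℝ) : ℝ :=
  eps N * ((∑ ℓ ∈ Finset.Icc (-K) K, qaAtom N pF p2F rF r2F rrF rr2F g1 g2 u ℓ)
    + qiAtom N pF p2F rF r2F rrF rr2F g1 g2 u K (K+1) (K+2)
    + qiAtom N pF p2F rF r2F rrF rr2F g1 g2 u (K+1) (K+2) (K+3)
    + qiAtom N pF p2F rF r2F rrF rr2F g1 g2 u (-K+1) (-K) (-K-1)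
    + qiAtom N pF p2F rF r2F rrF rr2F g1 g2 u (-K) (-K-1) (-K-2)
    + ∑ ℓ ∈ (Finset.Icc (-N+1) (-K-3) ∪ Finset.Icc (K+3) N),
        qcAtom N pF p2F rF r2F rrF rr2F g1 g2 u ℓ)


lemma sum_Icc_split (f : ℤ → ℝ) (a b c : ℤ) (h1 : a ≤ b + 1) (h2 : b ≤ c) :
    ∑ ℓ ∈ Icc a c, f ℓ = (∑ ℓ ∈ Icc a b, f ℓ) + ∑ ℓ ∈ Icc (b+1) c, f ℓ := by
  rw [← Finset.sum_union]
  · apply Finset.sum_congr _ (fun _ _ => rfl)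
    ext x; simp only [Finset.mem_union, Finset.mem_Icc]; omega
  · rw [Finset.disjoint_left]
    intro x hx hx'
    simp only [Finset.mem_Icc] at hx hx'; omega

lemma sum_Icc_shift (f : ℤ → ℝ) (a b : ℤ) :
    ∑ ℓ ∈ Icc a b, f (ℓ + 1) = ∑ ℓ ∈ Icc (a+1) (b+1), f ℓ := by
  rw [← Finset.map_add_right_Icc a b 1, Finset.sum_map]
  rfl

lemma sum_Icc_tele (f : ℤ → ℝ) (a : ℤ) : ∀ b : ℤ, a - 1 ≤ b →
    ∑ ℓ ∈ Icc a b, (f (ℓ+1) - f ℓ) = f (b+1) - f a := by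
  refine Int.le_induction ?_ ?_
  · rw [show a - 1 + 1 = a by ring, Finset.Icc_eq_empty (by omega)]
    simp
  · intro n hn ih
    have hins : Icc a (n+1) = insert (n+1) (Icc a n) := by
      ext x; simp only [Finset.mem_insert, Finset.mem_Icc]; omega
    rw [hins, Finset.sum_insert (by simp only [Finset.mem_Icc]; omega), ih]
    ring

/-- telescope potential -/
def E3 (B g2 rF r2F x y z : ℝ) : ℝ :=
  (B + g2*(7*(rF*r2F) + 12*r2F^2 + rF^2/2))*(x^2 - z^2)
    + g2*(6*(rF*r2F) + 8*r2F^2 + rF^2)*(x*y - y*z)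

/-- per-site nonnegative remainder -/
def Stile (B g2 rF r2F x y z w : ℝ) : ℝ :=
  B/2*((y-x)^2 + (w-z)^2)
    + g2*((rF*r2F)*((2*y-x-z)^2 + (2*z-y-w)^2)
      + r2F^2*((y+z-x-w)^2 + 2*(2*y-x-z)^2 + 2*(2*z-y-w)^2))

def W1c (B g2 rF r2F : ℝ) : ℝ := B/2 + g2*(rF*r2F + 4*r2F^2)
def W2c (B g2 rF r2F : ℝ) : ℝ := B/2 + g2*(7*(rF*r2F) + 12*r2F^2 + rF^2)

def Etel (B g2 rF r2F : ℝ) (N : ℤ) (u : ℤ → ℝ) (ℓ : ℤ) : ℝ :=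
  E3 B g2 rF r2F (Dd N u (ℓ-1)) (Dd N u ℓ) (Dd N u (ℓ+1))

lemma Etel_succ (B g2 rF r2F : ℝ) (N : ℤ) (u : ℤ → ℝ) (ℓ : ℤ) :
    Etel B g2 rF r2F N u (ℓ+1)
      = E3 B g2 rF r2F (Dd N u ℓ) (Dd N u (ℓ+1)) (Dd N u (ℓ+2)) := by
  unfold Etel
  rw [show ℓ+1-1 = ℓ by ring, show ℓ+1+1 = ℓ+2 by ring]

lemma qa_site (N : ℤ) (pF p2F rF r2F rrF rr2F g1 g2 : ℝ) (u : ℤ → ℝ) (ℓ : ℤ) :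
    qaAtom N pF p2F rF r2F rrF rr2F g1 g2 u ℓ
      = AFc pF p2F rF r2F rrF rr2F g1 g2 / 2 * ((Dd N u ℓ)^2 + (Dd N u (ℓ+1))^2)
        + (Etel (BFc p2F rF r2F rr2F g1 g2) g2 rF r2F N u (ℓ+1)
            - Etel (BFc p2F rF r2F rr2F g1 g2) g2 rF r2F N u ℓ)
        + Stile (BFc p2F rF r2F rr2F g1 g2) g2 rF r2F
            (Dd N u (ℓ-1)) (Dd N u ℓ) (Dd N u (ℓ+1)) (Dd N u (ℓ+2)) := by
  rw [Etel_succ]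
  simp only [qaAtom, AFc, Ahat, Atil, BFc, Etel, E3, Stile]
  ring

lemma qi_pair (N : ℤ) (pF p2F rF r2F rrF rr2F g1 g2 : ℝ) (u : ℤ → ℝ) (i j k l : ℤ) :
    qiAtom N pF p2F rF r2F rrF rr2F g1 g2 u i j k
      + qiAtom N pF p2F rF r2F rrF rr2F g1 g2 u j k l
      + E3 (BFc p2F rF r2F rr2F g1 g2) g2 rF r2F (Dd N u i) (Dd N u j) (Dd N u k)
    = AFc pF p2F rF r2F rrF rr2F g1 g2 / 2 * (Dd N u j)^2
      + AFc pF p2F rF r2F rrF rr2F g1 g2 * (Dd N u k)^2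
      + AFc pF p2F rF r2F rrF rr2F g1 g2 / 2 * (Dd N u l)^2
      + W1c (BFc p2F rF r2F rr2F g1 g2) g2 rF r2F * (Dd N u j - Dd N u i)^2
      + W2c (BFc p2F rF r2F rr2F g1 g2) g2 rF r2F * (Dd N u k - Dd N u j)^2 := by
  simp only [qiAtom, AFc, Ahat, Atil, BFc, E3, W1c, W2c]
  ring

lemma E3_antisym (B g2 rF r2F x y z : ℝ) :
    E3 B g2 rF r2F z y x = - E3 B g2 rF r2F x y z := by
  simp only [E3]; ring
lemma Dd_per (N : ℤ) (u : ℤ → ℝ) (hper : IsPer N u) (ℓ : ℤ) :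
    Dd N u (ℓ + 2*N) = Dd N u ℓ := by
  unfold Dd
  rw [hper ℓ, show ℓ + 2*N - 1 = (ℓ-1) + 2*N by ring, hper (ℓ-1)]

lemma qnl_decomp (N K : ℤ) (hK0 : 0 ≤ K) (hKN : K + 3 ≤ N)
    (pF p2F rF r2F rrF rr2F g1 g2 : ℝ) (u : ℤ → ℝ) (hper : IsPer N u) :
    Qqnl N K pF p2F rF r2F rrF rr2F g1 g2 u
      = eps N * (AFc pF p2F rF r2F rrF rr2F g1 g2 * ∑ ℓ ∈ Icc (-N+1) N, (Dd N u ℓ)^2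
        + ((∑ ℓ ∈ Icc (-K) K, Stile (BFc p2F rF r2F rr2F g1 g2) g2 rF r2F
              (Dd N u (ℓ-1)) (Dd N u ℓ) (Dd N u (ℓ+1)) (Dd N u (ℓ+2)))
          + W1c (BFc p2F rF r2F rr2F g1 g2) g2 rF r2F * (Dd N u (K+1) - Dd N u K)^2
          + W2c (BFc p2F rF r2F rr2F g1 g2) g2 rF r2F * (Dd N u (K+2) - Dd N u (K+1))^2
          + W1c (BFc p2F rF r2F rr2F g1 g2) g2 rF r2F * (Dd N u (-K) - Dd N u (-K+1))^2
          + W2c (BFc p2F rF r2F rr2F g1 g2) g2 rF r2F * (Dd N u (-K-1) - Dd N u (-K))^2)) := by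
  unfold Qqnl
  congr 1
  have shiftsum : ∀ m n : ℤ, ∑ ℓ ∈ Icc m n,
        AFc pF p2F rF r2F rrF rr2F g1 g2 / 2 * ((Dd N u ℓ)^2 + (Dd N u (ℓ+1))^2)
      = AFc pF p2F rF r2F rrF rr2F g1 g2 / 2 * (∑ ℓ ∈ Icc m n, (Dd N u ℓ)^2)
        + AFc pF p2F rF r2F rrF rr2F g1 g2 / 2 * (∑ ℓ ∈ Icc (m+1) (n+1), (Dd N u ℓ)^2) := by
    intro m n
    rw [← sum_Icc_shift (fun ℓ => (Dd N u ℓ)^2) m n, ← Finset.mul_sum,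
      Finset.sum_add_distrib, mul_add]
  -- H1 : atomistic sum
  have H1 : ∑ ℓ ∈ Icc (-K) K, qaAtom N pF p2F rF r2F rrF rr2F g1 g2 u ℓ
      = AFc pF p2F rF r2F rrF rr2F g1 g2 / 2 * (∑ ℓ ∈ Icc (-K) K, (Dd N u ℓ)^2)
        + AFc pF p2F rF r2F rrF rr2F g1 g2 / 2 * (∑ ℓ ∈ Icc (-K+1) (K+1), (Dd N u ℓ)^2)
        + (Etel (BFc p2F rF r2F rr2F g1 g2) g2 rF r2F N u (K+1)
            - Etel (BFc p2F rF r2F rr2F g1 g2) g2 rF r2F N u (-K))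
        + ∑ ℓ ∈ Icc (-K) K, Stile (BFc p2F rF r2F rr2F g1 g2) g2 rF r2F
            (Dd N u (ℓ-1)) (Dd N u ℓ) (Dd N u (ℓ+1)) (Dd N u (ℓ+2)) := by
    rw [Finset.sum_congr rfl (fun ℓ _ => qa_site N pF p2F rF r2F rrF rr2F g1 g2 u ℓ)]
    rw [Finset.sum_add_distrib, Finset.sum_add_distrib]
    rw [sum_Icc_tele (fun ℓ => Etel (BFc p2F rF r2F rr2F g1 g2) g2 rF r2F N u ℓ) (-K) K (by omega)]
    rw [shiftsum, show (-K)+1 = -K+1 by ring]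
  -- H2 / H3 : interfaces
  have H2 := qi_pair N pF p2F rF r2F rrF rr2F g1 g2 u K (K+1) (K+2) (K+3)
  have H3 := qi_pair N pF p2F rF r2F rrF rr2F g1 g2 u (-K+1) (-K) (-K-1) (-K-2)
  -- H4 : continuum sum
  have hdisj : Disjoint (Icc (-N+1) (-K-3)) (Icc (K+3) N) := by
    rw [Finset.disjoint_left]
    intro x hx hx'
    simp only [Finset.mem_Icc] at hx hx'; omega
  have H4 : ∑ ℓ ∈ (Icc (-N+1) (-K-3) ∪ Icc (K+3) N), qcAtom N pF p2F rF r2F rrF rr2F g1 g2 u ℓ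
      = AFc pF p2F rF r2F rrF rr2F g1 g2 / 2 * (∑ ℓ ∈ Icc (-N+1) (-K-3), (Dd N u ℓ)^2)
        + AFc pF p2F rF r2F rrF rr2F g1 g2 / 2 * (∑ ℓ ∈ Icc (-N+2) (-K-2), (Dd N u ℓ)^2)
        + AFc pF p2F rF r2F rrF rr2F g1 g2 / 2 * (∑ ℓ ∈ Icc (K+3) N, (Dd N u ℓ)^2)
        + AFc pF p2F rF r2F rrF rr2F g1 g2 / 2 * (∑ ℓ ∈ Icc (K+4) (N+1), (Dd N u ℓ)^2) := by
    rw [Finset.sum_union hdisj]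
    simp only [qcAtom]
    rw [shiftsum, shiftsum, show (-N+1)+1 = -N+2 by ring, show (-K-3)+1 = -K-2 by ring,
      show (K+3)+1 = K+4 by ring]
    ring
  -- telescope endpoints
  have H5 : Etel (BFc p2F rF r2F rr2F g1 g2) g2 rF r2F N u (K+1)
      = E3 (BFc p2F rF r2F rr2F g1 g2) g2 rF r2F (Dd N u K) (Dd N u (K+1)) (Dd N u (K+2)) :=
    Etel_succ (BFc p2F rF r2F rr2F g1 g2) g2 rF r2F N u K
  have H6 : Etel (BFc p2F rF r2F rr2F g1 g2) g2 rF r2F N u (-K)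
      = - E3 (BFc p2F rF r2F rr2F g1 g2) g2 rF r2F (Dd N u (-K+1)) (Dd N u (-K)) (Dd N u (-K-1)) := by
    show E3 (BFc p2F rF r2F rr2F g1 g2) g2 rF r2F (Dd N u (-K-1)) (Dd N u (-K)) (Dd N u (-K+1)) = _
    rw [E3_antisym]
  -- splitting facts
  have H7 : ∑ ℓ ∈ Icc (-K) (K+1), (Dd N u ℓ)^2
      = (∑ ℓ ∈ Icc (-K) K, (Dd N u ℓ)^2) + (Dd N u (K+1))^2 := by
    rw [sum_Icc_split (fun ℓ => (Dd N u ℓ)^2) (-K) K (K+1) (by omega) (by omega),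
      Finset.Icc_self, Finset.sum_singleton]
  have H8 : ∑ ℓ ∈ Icc (-K) (K+1), (Dd N u ℓ)^2
      = (Dd N u (-K))^2 + ∑ ℓ ∈ Icc (-K+1) (K+1), (Dd N u ℓ)^2 := by
    rw [sum_Icc_split (fun ℓ => (Dd N u ℓ)^2) (-K) (-K) (K+1) (by omega) (by omega),
      show (-K)+1 = -K+1 by ring, Finset.Icc_self, Finset.sum_singleton]
  have H9 : ∑ ℓ ∈ Icc (-N+1) (-K-2), (Dd N u ℓ)^2
      = (∑ ℓ ∈ Icc (-N+1) (-K-3), (Dd N u ℓ)^2) + (Dd N u (-K-2))^2 := by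
    rw [sum_Icc_split (fun ℓ => (Dd N u ℓ)^2) (-N+1) (-K-3) (-K-2) (by omega) (by omega),
      show (-K-3)+1 = -K-2 by ring, Finset.Icc_self, Finset.sum_singleton]
  have H10 : ∑ ℓ ∈ Icc (-N+1) (-K-2), (Dd N u ℓ)^2
      = (Dd N u (-N+1))^2 + ∑ ℓ ∈ Icc (-N+2) (-K-2), (Dd N u ℓ)^2 := by
    rw [sum_Icc_split (fun ℓ => (Dd N u ℓ)^2) (-N+1) (-N+1) (-K-2) (by omega) (by omega),
      show (-N+1)+1 = -N+2 by ring, Finset.Icc_self, Finset.sum_singleton]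
  have H11 : ∑ ℓ ∈ Icc (K+3) (N+1), (Dd N u ℓ)^2
      = (∑ ℓ ∈ Icc (K+3) N, (Dd N u ℓ)^2) + (Dd N u (N+1))^2 := by
    rw [sum_Icc_split (fun ℓ => (Dd N u ℓ)^2) (K+3) N (N+1) (by omega) (by omega),
      Finset.Icc_self, Finset.sum_singleton]
  have H12 : ∑ ℓ ∈ Icc (K+3) (N+1), (Dd N u ℓ)^2
      = (Dd N u (K+3))^2 + ∑ ℓ ∈ Icc (K+4) (N+1), (Dd N u ℓ)^2 := by
    rw [sum_Icc_split (fun ℓ => (Dd N u ℓ)^2) (K+3) (K+3) (N+1) (by omega) (by omega),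
      show (K+3)+1 = K+4 by ring, Finset.Icc_self, Finset.sum_singleton]
  have H13 : (Dd N u (N+1))^2 = (Dd N u (-N+1))^2 := by
    have h := Dd_per N u hper (-N+1)
    rw [show (-N+1) + 2*N = N+1 by ring] at h
    rw [h]
  have H14 : ∑ ℓ ∈ Icc (-N+1) N, (Dd N u ℓ)^2
      = (∑ ℓ ∈ Icc (-N+1) (-K-3), (Dd N u ℓ)^2) + (Dd N u (-K-2))^2 + (Dd N u (-K-1))^2
        + (∑ ℓ ∈ Icc (-K) (K+1), (Dd N u ℓ)^2) + (Dd N u (K+2))^2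
        + (∑ ℓ ∈ Icc (K+3) N, (Dd N u ℓ)^2) := by
    rw [sum_Icc_split (fun ℓ => (Dd N u ℓ)^2) (-N+1) (-K-3) N (by omega) (by omega),
      show (-K-3)+1 = -K-2 by ring]
    rw [sum_Icc_split (fun ℓ => (Dd N u ℓ)^2) (-K-2) (-K-2) N (by omega) (by omega),
      show (-K-2)+1 = -K-1 by ring, Finset.Icc_self, Finset.sum_singleton]
    rw [sum_Icc_split (fun ℓ => (Dd N u ℓ)^2) (-K-1) (-K-1) N (by omega) (by omega),
      show (-K-1)+1 = -K by ring, Finset.Icc_self, Finset.sum_singleton]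
    rw [sum_Icc_split (fun ℓ => (Dd N u ℓ)^2) (-K) (K+1) N (by omega) (by omega),
      show (K+1)+1 = K+2 by ring]
    rw [sum_Icc_split (fun ℓ => (Dd N u ℓ)^2) (K+2) (K+2) N (by omega) (by omega),
      show (K+2)+1 = K+3 by ring, Finset.Icc_self, Finset.sum_singleton]
    ring
  linear_combination H1 + H2 + H3 + H4 + H5 - H6
    - (AFc pF p2F rF r2F rrF rr2F g1 g2/2)*H7 - (AFc pF p2F rF r2F rrF rr2F g1 g2/2)*H8
    + (AFc pF p2F rF r2F rrF rr2F g1 g2/2)*H9 - (AFc pF p2F rF r2F rrF rr2F g1 g2/2)*H10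
    + (AFc pF p2F rF r2F rrF rr2F g1 g2/2)*H11 - (AFc pF p2F rF r2F rrF rr2F g1 g2/2)*H12
    + (AFc pF p2F rF r2F rrF rr2F g1 g2/2)*H13 - AFc pF p2F rF r2F rrF rr2F g1 g2*H14
lemma W1c_nonneg {B g2 rF r2F : ℝ} (hB : 0 ≤ B) (hg2 : 0 ≤ g2) (hrF : rF ≤ 0) (hr2F : r2F ≤ 0) :
    0 ≤ W1c B g2 rF r2F := by
  have hρ : 0 ≤ rF * r2F := by
    rw [← neg_mul_neg]; exact mul_nonneg (by linarith) (by linarith)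
  have : 0 ≤ g2 * (rF*r2F + 4*r2F^2) := mul_nonneg hg2 (by nlinarith [sq_nonneg r2F])
  unfold W1c; linarith

lemma W2c_nonneg {B g2 rF r2F : ℝ} (hB : 0 ≤ B) (hg2 : 0 ≤ g2) (hrF : rF ≤ 0) (hr2F : r2F ≤ 0) :
    0 ≤ W2c B g2 rF r2F := by
  have hρ : 0 ≤ rF * r2F := by
    rw [← neg_mul_neg]; exact mul_nonneg (by linarith) (by linarith)
  have : 0 ≤ g2 * (7*(rF*r2F) + 12*r2F^2 + rF^2) :=
    mul_nonneg hg2 (by nlinarith [sq_nonneg r2F, sq_nonneg rF])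
  unfold W2c; linarith

lemma Stile_nonneg {B g2 rF r2F : ℝ} (hB : 0 ≤ B) (hg2 : 0 ≤ g2) (hrF : rF ≤ 0) (hr2F : r2F ≤ 0)
    (x y z w : ℝ) : 0 ≤ Stile B g2 rF r2F x y z w := by
  have hρ : 0 ≤ rF * r2F := by
    rw [← neg_mul_neg]; exact mul_nonneg (by linarith) (by linarith)
  unfold Stile
  have h1 : 0 ≤ (rF*r2F)*((2*y-x-z)^2 + (2*z-y-w)^2) := mul_nonneg hρ (by positivity)
  have h2 : 0 ≤ r2F^2*((y+z-x-w)^2 + 2*(2*y-x-z)^2 + 2*(2*z-y-w)^2) :=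
    mul_nonneg (sq_nonneg _) (by positivity)
  have h3 : 0 ≤ B/2*((y-x)^2 + (w-z)^2) := mul_nonneg (by linarith) (by positivity)
  have h4 : 0 ≤ g2 * ((rF*r2F)*((2*y-x-z)^2 + (2*z-y-w)^2)
      + r2F^2*((y+z-x-w)^2 + 2*(2*y-x-z)^2 + 2*(2*z-y-w)^2)) := mul_nonneg hg2 (by linarith)
  linarith

lemma u_ext_per (N : ℤ) (u : ℤ → ℝ) (hper : IsPer N u) :
    ∀ (m : ℤ) (ℓ : ℤ), u (ℓ + 2*N*m) = u ℓ := by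
  intro m
  induction m using Int.induction_on with
  | zero => intro ℓ; norm_num
  | succ k ih =>
      intro ℓ
      rw [show ℓ + 2*N*((k:ℤ)+1) = (ℓ + 2*N*(k:ℤ)) + 2*N by ring, hper, ih]
  | pred k ih =>
      intro ℓ
      have h := hper (ℓ + 2*N*(-(k:ℤ)-1))
      rw [show ℓ + 2*N*(-(k:ℤ)-1) + 2*N = ℓ + 2*N*(-(k:ℤ)) by ring] at h
      rw [← h, ih]

lemma exists_Dd_ne (N : ℤ) (hN : 3 ≤ N) (u : ℤ → ℝ) (hu : InU N u) (hne : u ≠ 0) :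
    ∃ ℓ0 ∈ Icc (-N+1) N, Dd N u ℓ0 ≠ 0 := by
  by_contra hcon
  push_neg at hcon
  apply hne
  have hNr : (0:ℝ) < (N:ℝ) := by exact_mod_cast (show (0:ℤ) < N by omega)
  have heps : eps N ≠ 0 := by unfold eps; positivity
  have hstep : ∀ ℓ ∈ Icc (-N+1) N, u ℓ = u (ℓ-1) := by
    intro ℓ hℓ
    have h := hcon ℓ hℓ
    unfold Dd at h
    rcases div_eq_zero_iff.mp h with h' | h'
    · linarith [sub_eq_zero.mp h']
    · exact absurd h' heps
  have hconst : ∀ ℓ : ℤ, -N ≤ ℓ → ℓ ≤ N → u ℓ = u (-N) := by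
    refine Int.le_induction ?_ ?_
    · intro _; rfl
    · intro n hn ih hn1
      have h := hstep (n+1) (by simp only [Finset.mem_Icc]; omega)
      rw [show n+1-1 = n by ring] at h
      rw [h, ih (by omega)]
  have hval : u (-N) = 0 := by
    have hsum := hu.2
    have hconstsum : ∑ ℓ ∈ Icc (-N+1) N, u ℓ = (Icc (-N+1) N).card • u (-N) := by
      rw [Finset.sum_congr rfl (fun ℓ hℓ => by
        simp only [Finset.mem_Icc] at hℓ
        exact hconst ℓ (by omega) (by omega)), Finset.sum_const]
    rw [hconstsum, Int.card_Icc, nsmul_eq_mul] at hsum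
    have hc : ((N + 1 - (-N+1)).toNat : ℝ) = 2*(N:ℝ) := by
      rw [show (N + 1 - (-N+1)) = 2*N by ring]
      rw [show ((2*N).toNat : ℝ) = ((((2*N).toNat : ℤ)) : ℝ) by push_cast; ring]
      rw [Int.toNat_of_nonneg (by omega)]
      push_cast; ring
    rw [hc] at hsum
    have : 2*(N:ℝ) ≠ 0 := by positivity
    exact (mul_eq_zero.mp hsum).resolve_left this
  funext ℓ
  show u ℓ = 0
  have h2N : (0:ℤ) < 2*N := by omega
  set r := (ℓ + N - 1) % (2*N) with hr
  have hr0 : 0 ≤ r := Int.emod_nonneg _ (by omega)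
  have hr1 : r < 2*N := Int.emod_lt_of_pos _ h2N
  have hq := Int.emod_add_mul_ediv (ℓ + N - 1) (2*N)
  -- ℓ = (r - N + 1) + 2*N*((ℓ+N-1)/(2*N))
  have hrep : ℓ = (r - N + 1) + 2*N*((ℓ + N - 1)/(2*N)) := by omega
  rw [hrep, u_ext_per N u hu.1]
  rw [hconst (r - N + 1) (by omega) (by omega)]
  exact hval

def wit (N K : ℤ) : ℤ → ℝ := fun ℓ =>
  if (ℓ + K + 2) % (2*N) < 2*K + 5 then ((2*N - 2*K - 5 : ℤ) : ℝ) else ((-(2*K + 5) : ℤ) : ℝ)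

lemma wit_per (N K : ℤ) : IsPer N (wit N K) := by
  intro ℓ
  unfold wit
  rw [show ℓ + 2*N + K + 2 = (ℓ + K + 2) + 2*N*1 by ring, Int.add_mul_emod_self_left]

lemma wit_plateau (N K : ℤ) (hK0 : 0 ≤ K) (hKN : K + 3 ≤ N) (ℓ : ℤ)
    (h1 : -K-2 ≤ ℓ) (h2 : ℓ ≤ K+2) : wit N K ℓ = ((2*N - 2*K - 5 : ℤ) : ℝ) := by
  unfold wit
  rw [Int.emod_eq_of_lt (by omega) (by omega)]
  rw [if_pos (by omega)]

lemma wit_low (N K : ℤ) (hK0 : 0 ≤ K) (hKN : K + 3 ≤ N) (ℓ : ℤ)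
    (h1 : -N ≤ ℓ) (h2 : ℓ ≤ -K-3) : wit N K ℓ = ((-(2*K + 5) : ℤ) : ℝ) := by
  unfold wit
  rw [show ℓ + K + 2 = (ℓ + K + 2 + 2*N) + 2*N*(-1) by ring, Int.add_mul_emod_self_left,
    Int.emod_eq_of_lt (by omega) (by omega)]
  rw [if_neg (by omega)]

lemma wit_high (N K : ℤ) (hK0 : 0 ≤ K) (hKN : K + 3 ≤ N) (ℓ : ℤ)
    (h1 : K+3 ≤ ℓ) (h2 : ℓ ≤ 2*N - K - 3) : wit N K ℓ = ((-(2*K + 5) : ℤ) : ℝ) := by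
  unfold wit
  rw [Int.emod_eq_of_lt (by omega) (by omega)]
  rw [if_neg (by omega)]

lemma wit_Dd_zero (N K : ℤ) (hK0 : 0 ≤ K) (hKN : K + 3 ≤ N) (ℓ : ℤ)
    (h1 : -K-1 ≤ ℓ) (h2 : ℓ ≤ K+2) : Dd N (wit N K) ℓ = 0 := by
  unfold Dd
  rw [wit_plateau N K hK0 hKN ℓ (by omega) (by omega),
    wit_plateau N K hK0 hKN (ℓ-1) (by omega) (by omega)]
  simp

lemma wit_Dd_K3 (N K : ℤ) (hK0 : 0 ≤ K) (hKN : K + 3 ≤ N) :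
    Dd N (wit N K) (K+3) = -2*(N:ℝ)*(N:ℝ) := by
  have hNr : (0:ℝ) < (N:ℝ) := by exact_mod_cast (show (0:ℤ) < N by omega)
  unfold Dd
  rw [wit_high N K hK0 hKN (K+3) (by omega) (by omega),
    show K+3-1 = K+2 by ring, wit_plateau N K hK0 hKN (K+2) (by omega) (by omega)]
  unfold eps
  push_cast
  field_simp
  ring

lemma wit_mean (N K : ℤ) (hK0 : 0 ≤ K) (hKN : K + 3 ≤ N) :
    ∑ ℓ ∈ Icc (-N+1) N, wit N K ℓ = 0 := by
  rw [sum_Icc_split (wit N K) (-N+1) (-K-3) N (by omega) (by omega),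
    show (-K-3)+1 = -K-2 by ring,
    sum_Icc_split (wit N K) (-K-2) (K+2) N (by omega) (by omega),
    show (K+2)+1 = K+3 by ring]
  have e1 : ∑ ℓ ∈ Icc (-N+1) (-K-3), wit N K ℓ
      = (Icc (-N+1) (-K-3)).card • ((-(2*K + 5) : ℤ) : ℝ) := by
    rw [Finset.sum_congr rfl (fun ℓ hℓ => by
      simp only [Finset.mem_Icc] at hℓ
      exact wit_low N K hK0 hKN ℓ (by omega) (by omega)), Finset.sum_const]
  have e2 : ∑ ℓ ∈ Icc (-K-2) (K+2), wit N K ℓ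
      = (Icc (-K-2) (K+2)).card • ((2*N - 2*K - 5 : ℤ) : ℝ) := by
    rw [Finset.sum_congr rfl (fun ℓ hℓ => by
      simp only [Finset.mem_Icc] at hℓ
      exact wit_plateau N K hK0 hKN ℓ (by omega) (by omega)), Finset.sum_const]
  have e3 : ∑ ℓ ∈ Icc (K+3) N, wit N K ℓ
      = (Icc (K+3) N).card • ((-(2*K + 5) : ℤ) : ℝ) := by
    rw [Finset.sum_congr rfl (fun ℓ hℓ => by
      simp only [Finset.mem_Icc] at hℓ
      exact wit_high N K hK0 hKN ℓ (by omega) (by omega)), Finset.sum_const]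
  rw [e1, e2, e3, Int.card_Icc, Int.card_Icc, Int.card_Icc, nsmul_eq_mul, nsmul_eq_mul,
    nsmul_eq_mul]
  have c1 : (((-K-3) + 1 - (-N+1)).toNat : ℝ) = (N:ℝ) - (K:ℝ) - 3 := by
    rw [show ((-K-3) + 1 - (-N+1)) = N - K - 3 by ring,
      show (((N-K-3).toNat : ℕ) : ℝ) = (((N-K-3).toNat : ℤ) : ℝ) by push_cast; ring,
      Int.toNat_of_nonneg (by omega)]
    push_cast; ring
  have c2 : (((K+2) + 1 - (-K-2)).toNat : ℝ) = 2*(K:ℝ) + 5 := by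
    rw [show ((K+2) + 1 - (-K-2)) = 2*K + 5 by ring,
      show (((2*K+5).toNat : ℕ) : ℝ) = (((2*K+5).toNat : ℤ) : ℝ) by push_cast; ring,
      Int.toNat_of_nonneg (by omega)]
    push_cast; ring
  have c3 : ((N + 1 - (K+3)).toNat : ℝ) = (N:ℝ) - (K:ℝ) - 2 := by
    rw [show (N + 1 - (K+3)) = N - K - 2 by ring,
      show (((N-K-2).toNat : ℕ) : ℝ) = (((N-K-2).toNat : ℤ) : ℝ) by push_cast; ring,
      Int.toNat_of_nonneg (by omega)]
    push_cast; ring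
  rw [c1, c2, c3]
  push_cast
  ring

lemma wit_ne (N K : ℤ) (hK0 : 0 ≤ K) (hKN : K + 3 ≤ N) : wit N K ≠ 0 := by
  intro h
  have h0 := congrFun h 0
  simp only [Pi.zero_apply] at h0
  rw [wit_plateau N K hK0 hKN 0 (by omega) (by omega)] at h0
  have : (2*N - 2*K - 5 : ℤ) = 0 := by exact_mod_cast h0
  omega
/-- sharp stability of the EAM-QNL model. -/
theorem qnl_sharp_stability (N K : ℤ) (hK0 : 0 ≤ K) (hKN : K + 3 ≤ N)
    (pF p2F rF r2F rrF rr2F g1 g2 : ℝ)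
    (hH1a : 0 < pF) (hH1b : p2F < 0) (hH1c : rF ≤ 0) (hH1d : r2F ≤ 0)
    (hH1e : 0 ≤ rrF) (hH1f : 0 ≤ rr2F) (hH1g : 0 ≤ g2)
    (hH2 : 0 ≤ BFc p2F rF r2F rr2F g1 g2) :
    (∀ u : ℤ → ℝ, InU N u → u ≠ 0 → 0 < Qqnl N K pF p2F rF r2F rrF rr2F g1 g2 u)
    ↔ 0 < AFc pF p2F rF r2F rrF rr2F g1 g2 := by
  have hNr : (0:ℝ) < (N:ℝ) := by exact_mod_cast (show (0:ℤ) < N by omega)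
  have heps : 0 < eps N := by unfold eps; positivity
  constructor
  · intro hpos
    have hQ := hpos (wit N K) ⟨wit_per N K, wit_mean N K hK0 hKN⟩ (wit_ne N K hK0 hKN)
    rw [qnl_decomp N K hK0 hKN pF p2F rF r2F rrF rr2F g1 g2 (wit N K) (wit_per N K)] at hQ
    have hS0 : (∑ ℓ ∈ Icc (-K) K, Stile (BFc p2F rF r2F rr2F g1 g2) g2 rF r2F
        (Dd N (wit N K) (ℓ-1)) (Dd N (wit N K) ℓ)
        (Dd N (wit N K) (ℓ+1)) (Dd N (wit N K) (ℓ+2))) = 0 := by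
      apply Finset.sum_eq_zero
      intro ℓ hℓ
      simp only [Finset.mem_Icc] at hℓ
      rw [wit_Dd_zero N K hK0 hKN (ℓ-1) (by omega) (by omega),
        wit_Dd_zero N K hK0 hKN ℓ (by omega) (by omega),
        wit_Dd_zero N K hK0 hKN (ℓ+1) (by omega) (by omega),
        wit_Dd_zero N K hK0 hKN (ℓ+2) (by omega) (by omega)]
      unfold Stile; ring
    rw [hS0,
      wit_Dd_zero N K hK0 hKN (K+1) (by omega) (by omega),
      wit_Dd_zero N K hK0 hKN K (by omega) (by omega),
      wit_Dd_zero N K hK0 hKN (K+2) (by omega) (by omega),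
      wit_Dd_zero N K hK0 hKN (-K) (by omega) (by omega),
      wit_Dd_zero N K hK0 hKN (-K+1) (by omega) (by omega),
      wit_Dd_zero N K hK0 hKN (-K-1) (by omega) (by omega)] at hQ
    norm_num at hQ
    have hSig : 0 < ∑ ℓ ∈ Icc (-N+1) N, (Dd N (wit N K) ℓ)^2 := by
      have hmem : (K+3) ∈ Icc (-N+1) N := by simp only [Finset.mem_Icc]; omega
      have hle : (Dd N (wit N K) (K+3))^2 ≤ ∑ ℓ ∈ Icc (-N+1) N, (Dd N (wit N K) ℓ)^2 := by
        simpa using Finset.single_le_sum (f := fun ℓ => (Dd N (wit N K) ℓ)^2)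
          (fun i _ => sq_nonneg _) hmem
      have hpos3 : 0 < (Dd N (wit N K) (K+3))^2 := by
        rw [wit_Dd_K3 N K hK0 hKN]; positivity
      linarith
    by_contra h'
    push_neg at h'
    have hAS : AFc pF p2F rF r2F rrF rr2F g1 g2 * (∑ ℓ ∈ Icc (-N+1) N, (Dd N (wit N K) ℓ)^2) ≤ 0 :=
      mul_nonpos_iff.mpr (Or.inr ⟨h', hSig.le⟩)
    nlinarith [hQ, heps, hAS]
  · intro hA u hu hne
    obtain ⟨ℓ0, hmem, hD⟩ := exists_Dd_ne N (by omega) u hu hne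
    rw [qnl_decomp N K hK0 hKN pF p2F rF r2F rrF rr2F g1 g2 u hu.1]
    have hSig : 0 < ∑ ℓ ∈ Icc (-N+1) N, (Dd N u ℓ)^2 := by
      have hle : (Dd N u ℓ0)^2 ≤ ∑ ℓ ∈ Icc (-N+1) N, (Dd N u ℓ)^2 := by
        simpa using Finset.single_le_sum (f := fun ℓ => (Dd N u ℓ)^2)
          (fun i _ => sq_nonneg _) hmem
      have h0 : 0 < (Dd N u ℓ0)^2 := lt_of_le_of_ne (sq_nonneg _) (Ne.symm (pow_ne_zero 2 hD))
      linarith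
    have hS := Finset.sum_nonneg (fun ℓ (_ : ℓ ∈ Icc (-K) K) =>
      Stile_nonneg hH2 hH1g hH1c hH1d (Dd N u (ℓ-1)) (Dd N u ℓ) (Dd N u (ℓ+1)) (Dd N u (ℓ+2)))
    have w1 := W1c_nonneg hH2 hH1g hH1c hH1d
    have w2 := W2c_nonneg hH2 hH1g hH1c hH1d
    have m1 := mul_nonneg w1 (sq_nonneg (Dd N u (K+1) - Dd N u K))
    have m2 := mul_nonneg w2 (sq_nonneg (Dd N u (K+2) - Dd N u (K+1)))
    have m3 := mul_nonneg w1 (sq_nonneg (Dd N u (-K) - Dd N u (-K+1)))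
    have m4 := mul_nonneg w2 (sq_nonneg (Dd N u (-K-1) - Dd N u (-K)))
    apply mul_pos heps
    have hAS := mul_pos hA hSig
    linarith
end
end

section
/- There exists a constant c ≥ 0, depending only on (φ''_F, φ''_{2F}, ρ'_F, ρ'_{2F}, ρ''_F, ρ''_{2F}, G'_F, G''_F), such that the following holds: for all integers N, K with 3 ≤ K and K + 3 ≤ N, define the 2N-periodic sequence û by û_ℓ := (−1)^ℓ ε/(2√2) for |ℓ| ≤ K−1 and û_ℓ := 0 for K ≤ |ℓ| ≤ N (indices ℓ taken in the period {−N+1,…,N}). Then ‖Dû‖²_{ℓ²ε} = ε(K−1) + ε/4 and |Q^qnl(û)/‖Dû‖²_{ℓ²ε} − (φ''_F + 2G'_F ρ''_F)| ≤ c/K. -/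
open Finset

noncomputable section

/-- the oscillatory displacement supported in the atomistic region,
extended `2N`-periodically: `û_ℓ = (-1)^ℓ ε/(2√2)` for `|ℓ| ≤ K-1` and `û_ℓ = 0`
for `K ≤ |ℓ| ≤ N`, indices taken in the period `{-N+1,…,N}`. -/
def uhatK (N K : ℤ) : ℤ → ℝ := fun ℓ =>
  if |(ℓ + (N-1)) % (2*N) - (N-1)| ≤ K - 1
  then (-1:ℝ)^((ℓ + (N-1)) % (2*N) - (N-1)) * eps N / (2 * Real.sqrt 2)
  else 0


private lemma zpowE {m n : ℤ} (h : ∃ k, m = n + 2*k) : (-1:ℝ)^m = (-1:ℝ)^n := by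
  obtain ⟨k, rfl⟩ := h
  rw [zpow_add₀ (by norm_num : (-1:ℝ) ≠ 0), zpow_mul]
  norm_num

private lemma zpowO {m n : ℤ} (h : ∃ k, m = n + 2*k + 1) : (-1:ℝ)^m = -(-1:ℝ)^n := by
  obtain ⟨k, rfl⟩ := h
  rw [show n + 2*k + 1 = (n + 2*k) + 1 by ring, zpow_add_one₀ (by norm_num : (-1:ℝ) ≠ 0),
    zpow_add₀ (by norm_num : (-1:ℝ) ≠ 0), zpow_mul]
  norm_num

private lemma hsqz (m : ℤ) : ((-1:ℝ)^m)^2 = 1 := by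
  rcases Int.even_or_odd m with h|h
  · rw [h.neg_one_zpow]; norm_num
  · rw [h.neg_one_zpow]; norm_num

set_option maxHeartbeats 1000000 in
/-- the QNL Rayleigh quotient of `û` is `φ''_F + 2G'_F ρ''_F + O(1/K)`. -/
theorem qnl_rayleigh_quotient_estimate (pF p2F rF r2F rrF rr2F g1 g2 : ℝ) :
    ∃ c : ℝ, 0 ≤ c ∧ ∀ N K : ℤ, 3 ≤ K → K + 3 ≤ N →
      nrm2 N (Dd N (uhatK N K)) = eps N * ((K:ℝ) - 1) + eps N / 4 ∧
      |Qqnl N K pF p2F rF r2F rrF rr2F g1 g2 (uhatK N K) / nrm2 N (Dd N (uhatK N K))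
          - (pF + 2*g1*rrF)| ≤ c / (K:ℝ) := by
  refine ⟨2*|(14*pF + 4*p2F + 28*g1*rrF + 8*g1*rr2F + 4*g2*(rF-r2F)^2 + 6*g2*r2F^2)/8
      - (7/2)*(g1*rrF + pF/2)|, by positivity, ?_⟩
  intro N K hK hN
  have h2ne : Real.sqrt 2 ≠ 0 := ne_of_gt (Real.sqrt_pos.mpr (by norm_num))
  have h2sq : Real.sqrt 2 ^ 2 = 2 := Real.sq_sqrt (by norm_num)
  have hNpos : (0:ℝ) < (N:ℝ) := by exact_mod_cast (by omega : (0:ℤ) < N)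
  have hepspos : 0 < eps N := by rw [eps]; positivity
  have hepsne : eps N ≠ 0 := ne_of_gt hepspos
  have uval : ∀ ℓ : ℤ, -N+1 ≤ ℓ → ℓ ≤ N →
      uhatK N K ℓ = if |ℓ| ≤ K-1 then (-1:ℝ)^ℓ * eps N / (2*Real.sqrt 2) else 0 := by
    intro ℓ h1 h2
    simp only [uhatK]
    rw [Int.emod_eq_of_lt (by omega) (by omega), show ℓ + (N-1) - (N-1) = ℓ by ring]
  have uval0a : uhatK N K (-N) = 0 := by
    simp only [uhatK]
    rw [show -N + (N-1) = (2*N-1) + (2*N)*(-1) by ring, Int.add_mul_emod_self_left,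
      Int.emod_eq_of_lt (by omega) (by omega)]
    rw [if_neg]
    intro h
    rw [show (2*N-1) - (N-1) = N by ring, abs_of_nonneg (by omega : (0:ℤ) ≤ N)] at h
    omega
  have uval0b : uhatK N K (N+1) = 0 := by
    simp only [uhatK]
    rw [show N+1 + (N-1) = 2*N by ring, Int.emod_self]
    rw [if_neg]
    intro h
    rw [show (0:ℤ) - (N-1) = -(N-1) by ring, abs_neg,
      abs_of_nonneg (by omega : (0:ℤ) ≤ N-1)] at h
    omega
  have uzero : ∀ i : ℤ, (K ≤ i ∧ i ≤ N+1) ∨ (-N ≤ i ∧ i ≤ -K) → uhatK N K i = 0 := by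
    intro i hi
    by_cases h1 : i = -N
    · rw [h1]; exact uval0a
    by_cases h2 : i = N+1
    · rw [h2]; exact uval0b
    rw [uval i (by omega) (by omega), if_neg]
    intro h
    rw [abs_le] at h
    omega
  have Dzero : ∀ j : ℤ, ((K+1 ≤ j ∧ j ≤ N+1) ∨ (-N+1 ≤ j ∧ j ≤ -K)) →
      Dd N (uhatK N K) j = 0 := by
    intro j hj
    simp only [Dd]
    rw [uzero j (by omega), uzero (j-1) (by omega)]
    simp
  have Dfull : ∀ j : ℤ, -K+2 ≤ j → j ≤ K-1 →
      Dd N (uhatK N K) j = (-1:ℝ)^j / Real.sqrt 2 := by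
    intro j h1 h2
    simp only [Dd]
    rw [uval j (by omega) (by omega), uval (j-1) (by omega) (by omega),
      if_pos (abs_le.mpr ⟨by omega, by omega⟩), if_pos (abs_le.mpr ⟨by omega, by omega⟩),
      zpowO (m := j-1) (n := j) ⟨-1, by ring⟩]
    field_simp
    ring
  set y : ℝ := (-1:ℝ)^K / (2*Real.sqrt 2) with hy
  have hy2 : y^2 = 1/8 := by
    rw [hy, div_pow, hsqz K, mul_pow, h2sq]
    norm_num
  have dK : Dd N (uhatK N K) K = y := by
    simp only [Dd]
    rw [uval K (by omega) (by omega), uval (K-1) (by omega) (by omega),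
      if_neg (by intro h; rw [abs_le] at h; omega),
      if_pos (abs_le.mpr ⟨by omega, by omega⟩),
      zpowO (m := K-1) (n := K) ⟨-1, by ring⟩, hy]
    field_simp
    ring
  have dmKp1 : Dd N (uhatK N K) (-K+1) = -y := by
    simp only [Dd]
    rw [uval (-K+1) (by omega) (by omega), uval (-K+1-1) (by omega) (by omega),
      if_pos (abs_le.mpr ⟨by omega, by omega⟩),
      if_neg (by intro h; rw [abs_le] at h; omega),
      zpowO (m := -K+1) (n := K) ⟨-K, by ring⟩, hy]
    field_simp
    ring
  have dKp1 : Dd N (uhatK N K) (K+1) = 0 := Dzero (K+1) (by omega)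
  have dKp2 : Dd N (uhatK N K) (K+2) = 0 := Dzero (K+2) (by omega)
  have dKp3 : Dd N (uhatK N K) (K+3) = 0 := Dzero (K+3) (by omega)
  have dmK : Dd N (uhatK N K) (-K) = 0 := Dzero (-K) (by omega)
  have dmKm1 : Dd N (uhatK N K) (-K-1) = 0 := Dzero (-K-1) (by omega)
  have dmKm2 : Dd N (uhatK N K) (-K-2) = 0 := Dzero (-K-2) (by omega)
  have dKm1 : Dd N (uhatK N K) (K-1) = -2*y := by
    rw [Dfull (K-1) (by omega) (by omega), zpowO (m := K-1) (n := K) ⟨-1, by ring⟩, hy]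
    field_simp
  have dKm2 : Dd N (uhatK N K) (K-2) = 2*y := by
    rw [Dfull (K-2) (by omega) (by omega), zpowE (m := K-2) (n := K) ⟨-1, by ring⟩, hy]
    field_simp
  have dKm3 : Dd N (uhatK N K) (K-3) = -2*y := by
    rw [Dfull (K-3) (by omega) (by omega), zpowO (m := K-3) (n := K) ⟨-2, by ring⟩, hy]
    field_simp
  have dmKp2 : Dd N (uhatK N K) (-K+2) = 2*y := by
    rw [Dfull (-K+2) (by omega) (by omega), zpowE (m := -K+2) (n := K) ⟨-K+1, by ring⟩, hy]
    field_simp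
  have dmKp3 : Dd N (uhatK N K) (-K+3) = -2*y := by
    rw [Dfull (-K+3) (by omega) (by omega), zpowO (m := -K+3) (n := K) ⟨-K+1, by ring⟩, hy]
    field_simp
  have dmKp4 : Dd N (uhatK N K) (-K+4) = 2*y := by
    rw [Dfull (-K+4) (by omega) (by omega), zpowE (m := -K+4) (n := K) ⟨-K+2, by ring⟩, hy]
    field_simp
  -- the norm identity
  have hsub : ∑ ℓ ∈ Finset.Icc (-N+1) N, (Dd N (uhatK N K) ℓ)^2
      = ∑ ℓ ∈ Finset.Icc (-K+1) K, (Dd N (uhatK N K) ℓ)^2 := by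
    refine (Finset.sum_subset (Finset.Icc_subset_Icc (by omega) (by omega)) ?_).symm
    intro x hx hnx
    simp only [Finset.mem_Icc] at hx hnx
    rw [Dzero x (by omega)]
    ring
  have hsetN : Finset.Icc (-K+1) K = insert (-K+1) (insert K (Finset.Icc (-K+2) (K-1))) := by
    ext x
    simp only [Finset.mem_insert, Finset.mem_Icc]
    omega
  have hcard2 : ((Finset.Icc (-K+2) (K-1)).card : ℝ) = 2*(K:ℝ) - 2 := by
    rw [Int.card_Icc, show K-1+1-(-K+2) = 2*K-2 by ring]
    have h1 : ((2*K-2).toNat : ℤ) = 2*K-2 := Int.toNat_of_nonneg (by omega)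
    have h2 : (((2*K-2).toNat : ℤ) : ℝ) = ((2*K-2 : ℤ) : ℝ) := by exact_mod_cast h1
    push_cast at h2 ⊢
    linarith
  have hmid : ∑ ℓ ∈ Finset.Icc (-K+2) (K-1), (Dd N (uhatK N K) ℓ)^2
      = ((Finset.Icc (-K+2) (K-1)).card : ℝ) * (1/2) := by
    have h : ∀ ℓ ∈ Finset.Icc (-K+2) (K-1), (Dd N (uhatK N K) ℓ)^2 = 1/2 := by
      intro ℓ hℓ
      simp only [Finset.mem_Icc] at hℓ
      rw [Dfull ℓ hℓ.1 hℓ.2, div_pow, hsqz ℓ, h2sq]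
    rw [Finset.sum_congr rfl h, Finset.sum_const, nsmul_eq_mul]
  have hnrm : nrm2 N (Dd N (uhatK N K)) = eps N * ((K:ℝ) - 1) + eps N / 4 := by
    simp only [nrm2]
    rw [hsub, hsetN,
      Finset.sum_insert (by simp only [Finset.mem_insert, Finset.mem_Icc]; omega),
      Finset.sum_insert (by simp only [Finset.mem_Icc]; omega), dmKp1, dK, hmid, hcard2]
    linear_combination (2 * eps N) * hy2
  -- atomistic per-atom values
  have qaInt : ∀ ℓ : ℤ, -K+3 ≤ ℓ → ℓ ≤ K-3 →
      qaAtom N pF p2F rF r2F rrF rr2F g1 g2 (uhatK N K) ℓ = g1*rrF + pF/2 := by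
    intro ℓ h1 h2
    have hx2 : ((-1:ℝ)^ℓ / Real.sqrt 2)^2 = 1/2 := by
      rw [div_pow, hsqz ℓ, h2sq]
    simp only [qaAtom]
    rw [Dfull ℓ (by omega) (by omega), Dfull (ℓ+1) (by omega) (by omega),
      Dfull (ℓ-1) (by omega) (by omega), Dfull (ℓ+2) (by omega) (by omega),
      zpowO (m := ℓ+1) (n := ℓ) ⟨0, by ring⟩, zpowO (m := ℓ-1) (n := ℓ) ⟨-1, by ring⟩,
      zpowE (m := ℓ+2) (n := ℓ) ⟨1, by ring⟩]
    linear_combination (2*g1*rrF + pF) * hx2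
  have qaK : qaAtom N pF p2F rF r2F rrF rr2F g1 g2 (uhatK N K) K
      = (g2*(rF-r2F)^2 + g1*(rrF+rr2F) + (pF+p2F)/2)/8 := by
    simp only [qaAtom]
    rw [dK, dKp1, dKm1, dKp2]
    linear_combination (g2*(rF-r2F)^2 + g1*(rrF+rr2F) + (pF+p2F)/2) * hy2
  have qaKm1 : qaAtom N pF p2F rF r2F rrF rr2F g1 g2 (uhatK N K) (K-1)
      = (g2*(rF-r2F)^2 + g1*(5*rrF+rr2F) + (5*pF+p2F)/2)/8 := by
    simp only [qaAtom]
    rw [show K-1+1 = K by ring, show K-1-1 = K-2 by ring, show K-1+2 = K+1 by ring,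
      dKm1, dK, dKm2, dKp1]
    linear_combination (g2*(rF-r2F)^2 + g1*(5*rrF+rr2F) + (5*pF+p2F)/2) * hy2
  have qaKm2 : qaAtom N pF p2F rF r2F rrF rr2F g1 g2 (uhatK N K) (K-2)
      = (g2*r2F^2 + g1*(8*rrF+rr2F) + (8*pF+p2F)/2)/8 := by
    simp only [qaAtom]
    rw [show K-2+1 = K-1 by ring, show K-2-1 = K-3 by ring, show K-2+2 = K by ring,
      dKm2, dKm1, dKm3, dK]
    linear_combination (g2*r2F^2 + g1*(8*rrF+rr2F) + (8*pF+p2F)/2) * hy2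
  have qamK : qaAtom N pF p2F rF r2F rrF rr2F g1 g2 (uhatK N K) (-K)
      = (g2*(rF-r2F)^2 + g1*(rrF+rr2F) + (pF+p2F)/2)/8 := by
    simp only [qaAtom]
    rw [dmK, dmKp1, dmKm1, dmKp2]
    linear_combination (g2*(rF-r2F)^2 + g1*(rrF+rr2F) + (pF+p2F)/2) * hy2
  have qamKp1 : qaAtom N pF p2F rF r2F rrF rr2F g1 g2 (uhatK N K) (-K+1)
      = (g2*(rF-r2F)^2 + g1*(5*rrF+rr2F) + (5*pF+p2F)/2)/8 := by
    simp only [qaAtom]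
    rw [show -K+1+1 = -K+2 by ring, show -K+1-1 = -K by ring, show -K+1+2 = -K+3 by ring,
      dmKp1, dmKp2, dmK, dmKp3]
    linear_combination (g2*(rF-r2F)^2 + g1*(5*rrF+rr2F) + (5*pF+p2F)/2) * hy2
  have qamKp2 : qaAtom N pF p2F rF r2F rrF rr2F g1 g2 (uhatK N K) (-K+2)
      = (g2*r2F^2 + g1*(8*rrF+rr2F) + (8*pF+p2F)/2)/8 := by
    simp only [qaAtom]
    rw [show -K+2+1 = -K+3 by ring, show -K+2-1 = -K+1 by ring, show -K+2+2 = -K+4 by ring,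
      dmKp2, dmKp3, dmKp1, dmKp4]
    linear_combination (g2*r2F^2 + g1*(8*rrF+rr2F) + (8*pF+p2F)/2) * hy2
  -- interfacial values
  have hqi1 : qiAtom N pF p2F rF r2F rrF rr2F g1 g2 (uhatK N K) K (K+1) (K+2)
      = (2*g2*r2F^2 + g1*rr2F + p2F/2)/8 := by
    simp only [qiAtom]
    rw [dKp1, dK, dKp2]
    linear_combination (2*g2*r2F^2 + g1*rr2F + p2F/2) * hy2
  have hqi2 : qiAtom N pF p2F rF r2F rrF rr2F g1 g2 (uhatK N K) (K+1) (K+2) (K+3) = 0 := by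
    simp only [qiAtom]
    rw [dKp2, dKp1, dKp3]
    ring
  have hqi3 : qiAtom N pF p2F rF r2F rrF rr2F g1 g2 (uhatK N K) (-K+1) (-K) (-K-1)
      = (2*g2*r2F^2 + g1*rr2F + p2F/2)/8 := by
    simp only [qiAtom]
    rw [dmK, dmKp1, dmKm1]
    linear_combination (2*g2*r2F^2 + g1*rr2F + p2F/2) * hy2
  have hqi4 : qiAtom N pF p2F rF r2F rrF rr2F g1 g2 (uhatK N K) (-K) (-K-1) (-K-2) = 0 := by
    simp only [qiAtom]
    rw [dmKm1, dmK, dmKm2]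
    ring
  -- continuum region vanishes
  have hSc : ∑ ℓ ∈ (Finset.Icc (-N+1) (-K-3) ∪ Finset.Icc (K+3) N),
      qcAtom N pF p2F rF r2F rrF rr2F g1 g2 (uhatK N K) ℓ = 0 := by
    refine Finset.sum_eq_zero ?_
    intro ℓ hℓ
    simp only [Finset.mem_union, Finset.mem_Icc] at hℓ
    simp only [qcAtom]
    rw [Dzero ℓ (by omega), Dzero (ℓ+1) (by omega)]
    ring
  -- atomistic sum
  have hcardA : ((Finset.Icc (-K+3) (K-3)).card : ℝ) = 2*(K:ℝ) - 5 := by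
    rw [Int.card_Icc, show K-3+1-(-K+3) = 2*K-5 by ring]
    have h1 : ((2*K-5).toNat : ℤ) = 2*K-5 := Int.toNat_of_nonneg (by omega)
    have h2 : (((2*K-5).toNat : ℤ) : ℝ) = ((2*K-5 : ℤ) : ℝ) := by exact_mod_cast h1
    push_cast at h2 ⊢
    linarith
  have hintA : ∑ ℓ ∈ Finset.Icc (-K+3) (K-3),
      qaAtom N pF p2F rF r2F rrF rr2F g1 g2 (uhatK N K) ℓ = (2*(K:ℝ)-5) * (g1*rrF + pF/2) := by
    have h : ∀ ℓ ∈ Finset.Icc (-K+3) (K-3),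
        qaAtom N pF p2F rF r2F rrF rr2F g1 g2 (uhatK N K) ℓ = g1*rrF + pF/2 := by
      intro ℓ hℓ
      simp only [Finset.mem_Icc] at hℓ
      exact qaInt ℓ hℓ.1 hℓ.2
    rw [Finset.sum_congr rfl h, Finset.sum_const, nsmul_eq_mul, hcardA]
  have hsetA : Finset.Icc (-K) K = insert (-K) (insert (-K+1) (insert (-K+2)
      (insert (K-2) (insert (K-1) (insert K (Finset.Icc (-K+3) (K-3))))))) := by
    ext x
    simp only [Finset.mem_insert, Finset.mem_Icc]
    omega
  have hSa : ∑ ℓ ∈ Finset.Icc (-K) K, qaAtom N pF p2F rF r2F rrF rr2F g1 g2 (uhatK N K) ℓ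
      = (2*(K:ℝ)-5)*(g1*rrF+pF/2)
        + (14*pF + 3*p2F + 28*g1*rrF + 6*g1*rr2F + 4*g2*(rF-r2F)^2 + 2*g2*r2F^2)/8 := by
    rw [hsetA,
      Finset.sum_insert (by simp only [Finset.mem_insert, Finset.mem_Icc]; omega),
      Finset.sum_insert (by simp only [Finset.mem_insert, Finset.mem_Icc]; omega),
      Finset.sum_insert (by simp only [Finset.mem_insert, Finset.mem_Icc]; omega),
      Finset.sum_insert (by simp only [Finset.mem_insert, Finset.mem_Icc]; omega),
      Finset.sum_insert (by simp only [Finset.mem_insert, Finset.mem_Icc]; omega),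
      Finset.sum_insert (by simp only [Finset.mem_Icc]; omega),
      qamK, qamKp1, qamKp2, qaKm2, qaKm1, qaK, hintA]
    ring
  refine ⟨hnrm, ?_⟩
  have hQ : Qqnl N K pF p2F rF r2F rrF rr2F g1 g2 (uhatK N K)
      = eps N * ((2*(K:ℝ)-5)*(g1*rrF+pF/2)
        + (14*pF + 4*p2F + 28*g1*rrF + 8*g1*rr2F + 4*g2*(rF-r2F)^2 + 6*g2*r2F^2)/8) := by
    simp only [Qqnl]
    rw [hSa, hqi1, hqi2, hqi3, hqi4, hSc]
    ring
  have hnrm' : nrm2 N (Dd N (uhatK N K)) = eps N * ((K:ℝ) - 3/4) := by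
    rw [hnrm]; ring
  have hKR : (3:ℝ) ≤ (K:ℝ) := by exact_mod_cast hK
  have hKd : (0:ℝ) < (K:ℝ) - 3/4 := by linarith
  have hquot : Qqnl N K pF p2F rF r2F rrF rr2F g1 g2 (uhatK N K) / nrm2 N (Dd N (uhatK N K))
      - (pF + 2*g1*rrF)
      = ((14*pF + 4*p2F + 28*g1*rrF + 8*g1*rr2F + 4*g2*(rF-r2F)^2 + 6*g2*r2F^2)/8
        - (7/2)*(g1*rrF + pF/2)) / ((K:ℝ) - 3/4) := by
    have hne : (K:ℝ) - 3/4 ≠ 0 := ne_of_gt hKd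
    rw [hQ, hnrm', mul_div_mul_left _ _ hepsne,
      show (2*(K:ℝ)-5)*(g1*rrF+pF/2)
          + (14*pF + 4*p2F + 28*g1*rrF + 8*g1*rr2F + 4*g2*(rF-r2F)^2 + 6*g2*r2F^2)/8
        = ((14*pF + 4*p2F + 28*g1*rrF + 8*g1*rr2F + 4*g2*(rF-r2F)^2 + 6*g2*r2F^2)/8
          - (7/2)*(g1*rrF + pF/2)) + (pF + 2*g1*rrF)*((K:ℝ)-3/4) from by ring,
      add_div, mul_div_cancel_right₀ _ hne, add_sub_cancel_right]
  rw [hquot, abs_div, abs_of_pos hKd, div_le_div_iff₀ hKd (by linarith : (0:ℝ) < (K:ℝ))]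
  have hmm : ((K:ℝ)) ≤ 2*((K:ℝ) - 3/4) := by linarith
  calc |(14*pF + 4*p2F + 28*g1*rrF + 8*g1*rr2F + 4*g2*(rF-r2F)^2 + 6*g2*r2F^2)/8
        - (7/2)*(g1*rrF + pF/2)| * (K:ℝ)
      ≤ |(14*pF + 4*p2F + 28*g1*rrF + 8*g1*rr2F + 4*g2*(rF-r2F)^2 + 6*g2*r2F^2)/8
        - (7/2)*(g1*rrF + pF/2)| * (2*((K:ℝ) - 3/4)) :=
        mul_le_mul_of_nonneg_left hmm (abs_nonneg _)
    _ = 2*|(14*pF + 4*p2F + 28*g1*rrF + 8*g1*rr2F + 4*g2*(rF-r2F)^2 + 6*g2*r2F^2)/8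
        - (7/2)*(g1*rrF + pF/2)| * ((K:ℝ) - 3/4) := by ring
end
end
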